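/- For n > 6, in any (K_4, K_4[n])-saturated graph, no two vertices of degree exactly 4 are adjacent. -/

import Mathlib

open SimpleGraph

/-- The blow-up `H[n]` of a graph `H` onto parts of size `n`: each vertex of `H` is
replaced by an independent set of size `n`, each edge by a complete bipartite graph. -/
def blowup {V : Type*} (H : SimpleGraph V) (n : ℕ) : SimpleGraph (V × Fin n) :=
  SimpleGraph.comap Prod.fst H

/-- `f` selects one vertex in each part of the blow-up, forming a partite copy of `H` in `G`. -/
def IsPartiteCopy {V : Type*} {n : ℕ} (H : SimpleGraph V) (G : SimpleGraph (V × Fin n))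
    (f : V → Fin n) : Prop :=
  ∀ ⦃u v : V⦄, H.Adj u v → G.Adj (u, f u) (v, f v)

/-- `G ⊆ H[n]` is `(H,H[n])`-partite-saturated: it has no partite copy of `H`, but adding
any edge of `H[n]` not in `G` creates a partite copy of `H`. -/
def PartiteSaturated {V : Type*} {n : ℕ} (H : SimpleGraph V)
    (G : SimpleGraph (V × Fin n)) : Prop :=
  G ≤ blowup H n ∧ (¬ ∃ f, IsPartiteCopy H G f) ∧
    ∀ ⦃x y : V × Fin n⦄, (blowup H n).Adj x y → ¬ G.Adj x y →
      ∃ f, IsPartiteCopy H (G ⊔ SimpleGraph.fromEdgeSet {s(x, y)}) f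

/-- The degree of a vertex. -/
noncomputable def deg {α : Type*} (G : SimpleGraph α) (v : α) : ℕ := (G.neighborSet v).ncard

/-- `G ⊆ K_r[n]` is `(K_r,K_r[n])`-saturated: `G` is `K_r`-free but adding any edge of
`K_r[n]` not in `G` creates a copy of `K_r`. -/
def CliqueSaturated (r n : ℕ) (G : SimpleGraph (Fin r × Fin n)) : Prop :=
  G ≤ blowup (⊤ : SimpleGraph (Fin r)) n ∧ G.CliqueFree r ∧
    ∀ ⦃x y : Fin r × Fin n⦄, (blowup (⊤ : SimpleGraph (Fin r)) n).Adj x y → ¬ G.Adj x y →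
      ¬ (G ⊔ SimpleGraph.fromEdgeSet {s(x, y)}).CliqueFree r

section MyHelpers

variable {n : ℕ} {G : SimpleGraph (Fin 4 × Fin n)}

lemma adj_ne_part (hle : G ≤ blowup (⊤ : SimpleGraph (Fin 4)) n) {a b : Fin 4 × Fin n}
    (h : G.Adj a b) : a.1 ≠ b.1 := by
  have := hle h
  simpa [blowup] using this

lemma not_cliqueFree_of_k4 {a b c d : Fin 4 × Fin n}
    (hab : G.Adj a b) (hac : G.Adj a c) (had : G.Adj a d)
    (hbc : G.Adj b c) (hbd : G.Adj b d) (hcd : G.Adj c d) :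
    ¬ G.CliqueFree 4 := by
  intro h
  refine h {a, b, c, d} ⟨?_, ?_⟩
  · intro p hp q hq hpq
    simp only [Finset.coe_insert, Set.mem_insert_iff, Finset.coe_singleton,
      Set.mem_singleton_iff] at hp hq
    rcases hp with rfl | rfl | rfl | rfl <;> rcases hq with rfl | rfl | rfl | rfl <;>
      first
        | exact absurd rfl hpq
        | exact hab | exact hac | exact had | exact hbc | exact hbd | exact hcd
        | exact hab.symm | exact hac.symm | exact had.symm
        | exact hbc.symm | exact hbd.symm | exact hcd.symm
  · have h1 : a ∉ ({b, c, d} : Finset (Fin 4 × Fin n)) := by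
      simp only [Finset.mem_insert, Finset.mem_singleton]
      push_neg
      exact ⟨hab.ne, hac.ne, had.ne⟩
    have h2 : b ∉ ({c, d} : Finset (Fin 4 × Fin n)) := by
      simp only [Finset.mem_insert, Finset.mem_singleton]
      push_neg
      exact ⟨hbc.ne, hbd.ne⟩
    have h3 : c ∉ ({d} : Finset (Fin 4 × Fin n)) := by
      simp only [Finset.mem_singleton]
      exact hcd.ne
    rw [Finset.card_insert_of_notMem h1, Finset.card_insert_of_notMem h2,
      Finset.card_insert_of_notMem h3, Finset.card_singleton]

lemma sat_pair (hG : CliqueSaturated 4 n G) {x y : Fin 4 × Fin n}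
    (hp : x.1 ≠ y.1) (hnadj : ¬ G.Adj x y) {p q : Fin 4}
    (hpx : p ≠ x.1) (hpy : p ≠ y.1) (hqx : q ≠ x.1) (hqy : q ≠ y.1) (hpq : p ≠ q) :
    ∃ b c : Fin 4 × Fin n, b.1 = p ∧ c.1 = q ∧ G.Adj x b ∧ G.Adj y b ∧
      G.Adj x c ∧ G.Adj y c ∧ G.Adj b c := by
  have hbl : (blowup (⊤ : SimpleGraph (Fin 4)) n).Adj x y := by
    simp [blowup, hp]
  have hnc := hG.2.2 hbl hnadj
  rw [CliqueFree] at hnc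
  push_neg at hnc
  obtain ⟨t, ht⟩ := hnc
  have hG'adj : ∀ a b : Fin 4 × Fin n,
      (G ⊔ SimpleGraph.fromEdgeSet {s(x, y)}).Adj a b →
      G.Adj a b ∨ (a = x ∧ b = y) ∨ (a = y ∧ b = x) := by
    intro a b h
    rcases h with h | h
    · exact Or.inl h
    · rw [SimpleGraph.fromEdgeSet_adj] at h
      have := h.1
      simp only [Set.mem_singleton_iff, Sym2.eq_iff] at this
      tauto
  have hxt : x ∈ t := by
    by_contra hx
    refine hG.2.1 t ⟨?_, ht.2⟩
    intro a ha b hb hab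
    rcases hG'adj a b (ht.1 ha hb hab) with h | ⟨rfl, rfl⟩ | ⟨rfl, rfl⟩
    · exact h
    · exact absurd ha hx
    · exact absurd hb hx
  have hyt : y ∈ t := by
    by_contra hy
    refine hG.2.1 t ⟨?_, ht.2⟩
    intro a ha b hb hab
    rcases hG'adj a b (ht.1 ha hb hab) with h | ⟨rfl, rfl⟩ | ⟨rfl, rfl⟩
    · exact h
    · exact absurd hb hy
    · exact absurd ha hy
  have himg : ∀ r : Fin 4, ∃ a ∈ t, a.1 = r := by
    have hinj : Set.InjOn (Prod.fst : Fin 4 × Fin n → Fin 4) ↑t := by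
      intro a ha b hb hfe
      by_contra hne
      have hadj := ht.1 ha hb hne
      have hne1 : a.1 ≠ b.1 := by
        rcases hG'adj a b hadj with h | ⟨rfl, rfl⟩ | ⟨rfl, rfl⟩
        · exact adj_ne_part hG.1 h
        · exact hp
        · exact hp.symm
      exact hne1 hfe
    have hcard : (t.image Prod.fst).card = 4 := by
      rw [Finset.card_image_of_injOn hinj, ht.2]
    have huniv := Finset.eq_univ_of_card (t.image Prod.fst) (by simp [hcard])
    intro r
    have : r ∈ t.image Prod.fst := by rw [huniv]; exact Finset.mem_univ r
    simpa using this
  obtain ⟨b, hbt, hbp⟩ := himg p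
  obtain ⟨c, hct, hcq⟩ := himg q
  have hbx : b ≠ x := fun h => hpx (by rw [← hbp, h])
  have hby : b ≠ y := fun h => hpy (by rw [← hbp, h])
  have hcx : c ≠ x := fun h => hqx (by rw [← hcq, h])
  have hcy : c ≠ y := fun h => hqy (by rw [← hcq, h])
  have hbc : b ≠ c := fun h => hpq (by rw [← hbp, ← hcq, h])
  have key : ∀ a a' : Fin 4 × Fin n, a ∈ t → a' ∈ t → a ≠ a' →
      ¬(a = x ∧ a' = y) → ¬(a = y ∧ a' = x) → G.Adj a a' := by
    intro a a' ha ha' hne h1 h2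
    rcases hG'adj a a' (ht.1 ha ha' hne) with h | h | h
    · exact h
    · exact absurd h h1
    · exact absurd h h2
  refine ⟨b, c, hbp, hcq, ?_, ?_, ?_, ?_, ?_⟩
  · exact key x b hxt hbt (Ne.symm hbx) (fun h => hby h.2) (fun h => hp (by rw [h.1]))
  · exact key y b hyt hbt (Ne.symm hby) (fun h => hp (by rw [h.1])) (fun h => hbx h.2)
  · exact key x c hxt hct (Ne.symm hcx) (fun h => hcy h.2) (fun h => hp (by rw [h.1]))
  · exact key y c hyt hct (Ne.symm hcy) (fun h => hp (by rw [h.1])) (fun h => hcx h.2)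
  · exact key b c hbt hct hbc (fun h => hbx h.1) (fun h => hby h.1)

lemma part_ncard (p : Fin 4) : {w : Fin 4 × Fin n | w.1 = p}.ncard = n := by
  have hset : {w : Fin 4 × Fin n | w.1 = p} = (fun i : Fin n => (p, i)) '' Set.univ := by
    ext w
    simp only [Set.mem_setOf_eq, Set.image_univ, Set.mem_range]
    constructor
    · intro h
      exact ⟨w.2, by rw [← h]⟩
    · rintro ⟨i, rfl⟩
      rfl
  rw [hset, Set.ncard_image_of_injective _ (fun i j h => by simpa using congrArg Prod.snd h)]
  simp [Set.ncard_univ]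

lemma aux_deg (hn : 6 < n) (hG : CliqueSaturated 4 n G)
    {u v v2 x y : Fin 4 × Fin n}
    (hNu : G.neighborSet u = {v, v2, x, y})
    (hv2v : v2 ≠ v) (hv2p : v2.1 = v.1)
    (huvp : u.1 ≠ v.1) (hxu : x.1 ≠ u.1) (hxv : x.1 ≠ v.1)
    (hyu : y.1 ≠ u.1) (hyv : y.1 ≠ v.1) (hxy1 : x.1 ≠ y.1)
    (hxy : G.Adj x y) (hdv : deg G v = 4) (hvy : ¬ G.Adj v y) : False := by
  have huv : G.Adj u v := by
    have : v ∈ G.neighborSet u := by rw [hNu]; simp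
    exact this
  have huv2 : G.Adj u v2 := by
    have : v2 ∈ G.neighborSet u := by rw [hNu]; simp
    exact this
  have hux : G.Adj u x := by
    have : x ∈ G.neighborSet u := by rw [hNu]; simp
    exact this
  have huy : G.Adj u y := by
    have : y ∈ G.neighborSet u := by rw [hNu]; simp
    exact this
  have hmem : ∀ z : Fin 4 × Fin n, G.Adj u z → z = v ∨ z = v2 ∨ z = x ∨ z = y := by
    intro z hz
    have : z ∈ G.neighborSet u := hz
    rw [hNu] at this
    simpa using this
  have hmemP2 : ∀ z : Fin 4 × Fin n, G.Adj u z → z.1 = v.1 → z = v ∨ z = v2 := by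
    intro z hz h1
    rcases hmem z hz with rfl | rfl | rfl | rfl
    · exact Or.inl rfl
    · exact Or.inr rfl
    · exact absurd h1 hxv
    · exact absurd h1 hyv
  have hmemP3 : ∀ z : Fin 4 × Fin n, G.Adj u z → z.1 = x.1 → z = x := by
    intro z hz h1
    rcases hmem z hz with rfl | rfl | rfl | rfl
    · exact absurd h1.symm hxv
    · exact absurd (hv2p.symm.trans h1).symm hxv
    · rfl
    · exact absurd h1.symm hxy1
  have hmemP4 : ∀ z : Fin 4 × Fin n, G.Adj u z → z.1 = y.1 → z = y := by
    intro z hz h1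
    rcases hmem z hz with rfl | rfl | rfl | rfl
    · exact absurd h1.symm hyv
    · exact absurd (hv2p.symm.trans h1).symm hyv
    · exact absurd h1 hxy1
    · rfl
  -- Step D : v2 ~ y
  have : Nontrivial (Fin n) := Fin.nontrivial_iff_two_le.mpr (by omega)
  obtain ⟨j, hj⟩ := exists_ne x.2
  have hw3adj : ¬ G.Adj u (x.1, j) := by
    intro h
    exact hj (congrArg Prod.snd (hmemP3 _ h rfl))
  have hv2y : G.Adj v2 y := by
    obtain ⟨b, c, hb1, hc1, hub, hw3b, huc, hw3c, hbc⟩ :=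
      sat_pair hG (x := u) (y := (x.1, j)) hxu.symm hw3adj
        (p := v.1) (q := y.1) huvp.symm hxv.symm hyu hxy1.symm hyv.symm
    have hcy : c = y := hmemP4 c huc hc1
    rw [hcy] at hbc
    rcases hmemP2 b hub hb1 with rfl | rfl
    · exact absurd hbc hvy
    · exact hbc
  -- v2 ~ x would give a K4
  have hK4 : ¬ G.Adj v2 x := by
    intro h
    exact not_cliqueFree_of_k4 huv2 hux huy h hv2y hxy hG.2.1
  -- Step E : v is adjacent to everything in part y.1 except y
  have hall : ∀ w : Fin 4 × Fin n, w.1 = y.1 → w ≠ y → G.Adj v w := by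
    intro w hw1 hwy
    have hwadj : ¬ G.Adj u w := fun h => hwy (hmemP4 _ h hw1)
    obtain ⟨b, c, hb1, hc1, hub, hwb, huc, hwc, hbc⟩ :=
      sat_pair hG (x := u) (y := w) (by rw [hw1]; exact hyu.symm) hwadj
        (p := v.1) (q := x.1) huvp.symm (by rw [hw1]; exact hyv.symm) hxu
        (by rw [hw1]; exact hxy1) hxv.symm
    have hcx : c = x := hmemP3 c huc hc1
    rw [hcx] at hbc
    rcases hmemP2 b hub hb1 with rfl | rfl
    · exact hwb.symm
    · exact absurd hbc hK4
  -- counting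
  have hsub : insert u ({w : Fin 4 × Fin n | w.1 = y.1} \ {y}) ⊆ G.neighborSet v := by
    intro z hz
    rcases Set.mem_insert_iff.mp hz with rfl | hz
    · exact huv.symm
    · exact hall z hz.1 (by simpa using hz.2)
  have h1 : ({w : Fin 4 × Fin n | w.1 = y.1} \ {y}).ncard = n - 1 := by
    rw [Set.ncard_diff_singleton_of_mem (show y ∈ {w : Fin 4 × Fin n | w.1 = y.1} from rfl),
      part_ncard]
  have h2 : (insert u ({w : Fin 4 × Fin n | w.1 = y.1} \ {y})).ncard = n - 1 + 1 := by
    rw [Set.ncard_insert_of_notMem (fun h => hyu h.1.symm) (Set.toFinite _), h1]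
  have h3 := Set.ncard_le_ncard hsub (Set.toFinite _)
  rw [h2] at h3
  have hdv' : (G.neighborSet v).ncard = 4 := hdv
  omega

end MyHelpers

/-- For `n > 6`, in any `(K_4,K_4[n])`-saturated graph, no two vertices of degree
exactly `4` are adjacent. -/
theorem stmt_2 (n : ℕ) (hn : 6 < n) (G : SimpleGraph (Fin 4 × Fin n))
    (hG : CliqueSaturated 4 n G) :
    ∀ u v : Fin 4 × Fin n, deg G u = 4 → deg G v = 4 → ¬ G.Adj u v := by
  intro u v hdu hdv huv
  have hdu' : (G.neighborSet u).ncard = 4 := hdu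
  have hdv' : (G.neighborSet v).ncard = 4 := hdv
  have hfree := hG.2.1
  have hne : u.1 ≠ v.1 := adj_ne_part hG.1 huv
  have h4 : ∀ a b : Fin 4, a ≠ b →
      ∃ p q : Fin 4, p ≠ q ∧ p ≠ a ∧ p ≠ b ∧ q ≠ a ∧ q ≠ b := by decide
  obtain ⟨p3, p4, hpq, hp3u, hp3v, hp4u, hp4v⟩ := h4 u.1 v.1 hne
  -- Step A : there is a second neighbour of u in v's part
  have hA : ∃ v2 : Fin 4 × Fin n, v2 ≠ v ∧ v2.1 = v.1 ∧ G.Adj u v2 := by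
    by_contra hA
    push_neg at hA
    have honly : ∀ z : Fin 4 × Fin n, G.Adj u z → z.1 = v.1 → z = v := by
      intro z hz h1
      by_contra hzz
      exact absurd hz (fun h => (hA z hzz h1) h)
    have hclaim : ∀ w : Fin 4 × Fin n, w.1 = p3 → ¬ G.Adj u w → G.Adj v w := by
      intro w hw1 hw2
      obtain ⟨b, c, hb1, hc1, hub, hwb, huc, hwc, hbc⟩ :=
        sat_pair hG (x := u) (y := w) (by rw [hw1]; exact fun h => hp3u h.symm) hw2
          (p := v.1) (q := p4) hne.symm (by rw [hw1]; exact fun h => hp3v h.symm)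
          hp4u (by rw [hw1]; exact fun h => hpq h.symm) (fun h => hp4v h.symm)
      have hbv : b = v := honly b hub hb1
      rw [hbv] at hwb
      exact hwb.symm
    have hsub : insert u ({w : Fin 4 × Fin n | w.1 = p3} \ G.neighborSet u) ⊆
        G.neighborSet v := by
      intro z hz
      rcases Set.mem_insert_iff.mp hz with rfl | hz
      · exact huv.symm
      · exact hclaim z hz.1 hz.2
    have hcard3 : ({w : Fin 4 × Fin n | w.1 = p3} \ G.neighborSet u).ncard + 3 ≥ n := by
      have hsub2 : {w : Fin 4 × Fin n | w.1 = p3} ⊆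
          ({w : Fin 4 × Fin n | w.1 = p3} \ G.neighborSet u) ∪ (G.neighborSet u \ {v}) := by
        intro z hz
        by_cases h : z ∈ G.neighborSet u
        · right
          refine ⟨h, fun hzv => ?_⟩
          have hzv' : z = v := hzv
          have hz1 : z.1 = p3 := hz
          exact hp3v (by rw [← hzv']; exact hz1.symm)
        · left
          exact ⟨hz, h⟩
      have hle := Set.ncard_le_ncard hsub2 (Set.toFinite _)
      have hun := Set.ncard_union_le ({w : Fin 4 × Fin n | w.1 = p3} \ G.neighborSet u)
        (G.neighborSet u \ {v})
      have hNv : (G.neighborSet u \ {v}).ncard = 3 := by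
        rw [Set.ncard_diff_singleton_of_mem (show v ∈ G.neighborSet u from huv), hdu']
      rw [part_ncard] at hle
      omega
    have hcount := Set.ncard_le_ncard hsub (Set.toFinite _)
    rw [Set.ncard_insert_of_notMem (fun h => hp3u h.1.symm) (Set.toFinite _)] at hcount
    rw [hdv'] at hcount
    omega
  obtain ⟨v2, hv2v, hv2p, huv2⟩ := hA
  -- Step B : a non-neighbour of u in v's part, giving the edge x-y inside N(u)
  have hB : ∃ w2 : Fin 4 × Fin n, w2.1 = v.1 ∧ ¬ G.Adj u w2 := by
    by_contra hB
    push_neg at hB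
    have hsub : {w : Fin 4 × Fin n | w.1 = v.1} ⊆ G.neighborSet u := fun z hz => hB z hz
    have hle := Set.ncard_le_ncard hsub (Set.toFinite _)
    rw [part_ncard, hdu'] at hle
    omega
  obtain ⟨w2, hw21, hw22⟩ := hB
  obtain ⟨x, y, hx1, hy1, hux, hw2x, huy, hw2y, hxy⟩ :=
    sat_pair hG (x := u) (y := w2) (by rw [hw21]; exact hne) hw22
      (p := p3) (q := p4) hp3u (by rw [hw21]; exact hp3v) hp4u
      (by rw [hw21]; exact hp4v) hpq
  -- N(u) = {v, v2, x, y}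
  have hvx4 : v ≠ x := fun h => hp3v (by rw [← hx1, ← h])
  have hvy4 : v ≠ y := fun h => hp4v (by rw [← hy1, ← h])
  have hv2x4 : v2 ≠ x := fun h => hp3v (by rw [← hx1, ← h]; exact hv2p)
  have hv2y4 : v2 ≠ y := fun h => hp4v (by rw [← hy1, ← h]; exact hv2p)
  have hxy4 : x ≠ y := fun h => hpq (by rw [← hx1, ← hy1, h])
  have hsub4 : ({v, v2, x, y} : Set (Fin 4 × Fin n)) ⊆ G.neighborSet u := by
    intro z hz
    simp only [Set.mem_insert_iff, Set.mem_singleton_iff] at hz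
    rcases hz with rfl | rfl | rfl | rfl
    · exact huv
    · exact huv2
    · exact hux
    · exact huy
  have hcard4 : ({v, v2, x, y} : Set (Fin 4 × Fin n)).ncard = 4 := by
    rw [Set.ncard_insert_of_notMem (by simp [hv2v.symm, hvx4, hvy4]) (Set.toFinite _),
      Set.ncard_insert_of_notMem (by simp [hv2x4, hv2y4]) (Set.toFinite _),
      Set.ncard_insert_of_notMem (by simp [hxy4]) (Set.toFinite _),
      Set.ncard_singleton]
  have hNu : G.neighborSet u = {v, v2, x, y} := by
    have heq := Set.eq_of_subset_of_ncard_le hsub4 (by rw [hcard4, hdu']) (Set.toFinite _)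
    exact heq.symm
  by_cases hvy : G.Adj v y
  · have hvx : ¬ G.Adj v x := by
      intro h
      exact not_cliqueFree_of_k4 huv hux huy h hvy hxy hfree
    have hNu' : G.neighborSet u = {v, v2, y, x} := by
      rw [hNu]
      ext z
      simp only [Set.mem_insert_iff, Set.mem_singleton_iff]
      tauto
    exact aux_deg hn hG hNu' hv2v hv2p hne
      (by rw [hy1]; exact hp4u) (by rw [hy1]; exact hp4v)
      (by rw [hx1]; exact hp3u) (by rw [hx1]; exact hp3v)
      (by rw [hx1, hy1]; exact hpq.symm) hxy.symm hdv hvx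
  · exact aux_deg hn hG hNu hv2v hv2p hne
      (by rw [hx1]; exact hp3u) (by rw [hx1]; exact hp3v)
      (by rw [hy1]; exact hp4u) (by rw [hy1]; exact hp4v)
      (by rw [hx1, hy1]; exact hpq) hxy hdv hvy
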